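/- Let f : ℝ^n → ℝ be continuous and u : ℝ^n × ℝ^n → ℝ be continuous with u(x,z) ≥ f(x), u(z,z) = f(z). If a subsequence x^{t_j} of the MM iterates converges to z, and the full sequence f(x^t) is non-increasing, then u(z, z) ≤ u(x, z) for all x, i.e., z is a global minimizer of u(·, z). -/
import Mathlib

open Filter Topology

theorem mm_limit_point_minimizes_surrogate {n : ℕ}
    (f : EuclideanSpace ℝ (Fin n) → ℝ)
    (u : EuclideanSpace ℝ (Fin n) → EuclideanSpace ℝ (Fin n) → ℝ)
    (hf : Continuous f)
    (hu : Continuous (fun p : EuclideanSpace ℝ (Fin n) × EuclideanSpace ℝ (Fin n) => u p.1 p.2))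
    (hmaj : ∀ x z, f x ≤ u x z) (htight : ∀ z, u z z = f z)
    (x : ℕ → EuclideanSpace ℝ (Fin n))
    (hiter : ∀ t, ∀ y, u (x (t + 1)) (x t) ≤ u y (x t))
    (hdecr : ∀ t, f (x (t + 1)) ≤ f (x t))
    (z : EuclideanSpace ℝ (Fin n))
    (φ : ℕ → ℕ) (hφ : StrictMono φ)
    (hconv : Tendsto (fun j => x (φ j)) atTop (𝓝 z)) :
    ∀ y, u z z ≤ u y z := by
  intro y
  have hanti : Antitone (fun t => f (x t)) :=
    antitone_nat_of_succ_le (fun t => hdecr t)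
  have h1 : Tendsto (fun j => f (x (φ j))) atTop (𝓝 (f z)) :=
    (hf.tendsto z).comp hconv
  have h1' : Tendsto (fun j => f (x (φ (j + 1)))) atTop (𝓝 (f z)) :=
    h1.comp (tendsto_add_atTop_nat 1)
  have hsq : Tendsto (fun j => f (x (φ j + 1))) atTop (𝓝 (f z)) := by
    refine tendsto_of_tendsto_of_tendsto_of_le_of_le h1' h1 ?_ ?_
    · intro j
      exact hanti (Nat.succ_le_of_lt (hφ (Nat.lt_succ_self j)))
    · intro j
      exact hanti (Nat.le_succ _)
  have h2 : Tendsto (fun j => u y (x (φ j))) atTop (𝓝 (u y z)) :=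
    ((hu.comp (Continuous.prodMk_right y)).tendsto z).comp hconv
  have hle : f z ≤ u y z := by
    refine le_of_tendsto_of_tendsto' hsq h2 (fun j => ?_)
    exact le_trans (hmaj _ _) (hiter (φ j) y)
  rw [htight]
  exact hle
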